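/- Let S be a numerical semigroup with multiplicity m and Ŝ its Apéry saturation. Then Ŝ = S if and only if S is a MED numerical semigroup, and in all cases m(Ŝ) = m and S ⊆ Ŝ. -/
import Mathlib


/-- A numerical semigroup: an additive submonoid of ℕ with finite complement. -/
structure NumSgp where
  carrier : Set ℕ
  zero_mem : 0 ∈ carrier
  add_mem : ∀ ⦃a b : ℕ⦄, a ∈ carrier → b ∈ carrier → a + b ∈ carrier
  cofinite : carrierᶜ.Finite

/-- The multiplicity: the smallest nonzero element. -/
noncomputable def NumSgp.mult (S : NumSgp) : ℕ := sInf {n | n ∈ S.carrier ∧ n ≠ 0}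

/-- The Apéry set of `S` with respect to `s`: elements `x ∈ S` with `x - s ∉ S`
(over the integers, i.e. there is no `y ∈ S` with `y + s = x`). -/
def NumSgp.Ap (S : NumSgp) (s : ℕ) : Set ℕ :=
  {x | x ∈ S.carrier ∧ ∀ y ∈ S.carrier, y + s ≠ x}

/-- `z` is an Arf element of `S`. -/
def NumSgp.ArfElem (S : NumSgp) (z : ℕ) : Prop :=
  ∀ x ∈ S.carrier, ∀ y ∈ S.carrier, z ≤ x → z ≤ y → x + y - z ∈ S.carrier

/-- The minimal generating set: nonzero elements not expressible as a sum of two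
nonzero elements of `S`. -/
def NumSgp.minGen (S : NumSgp) : Set ℕ :=
  {x | x ∈ S.carrier ∧ x ≠ 0 ∧ ∀ a ∈ S.carrier, ∀ b ∈ S.carrier, a ≠ 0 → b ≠ 0 → a + b ≠ x}

/-- The embedding dimension: the cardinality of the minimal generating set. -/
noncomputable def NumSgp.edim (S : NumSgp) : ℕ := S.minGen.ncard

/-- The Frobenius number: the largest gap. -/
noncomputable def NumSgp.frob (S : NumSgp) : ℕ := sSup S.carrierᶜ

/-- The conductor: the smallest `c` with `c + ℤ≥0 ⊆ S`. -/
noncomputable def NumSgp.cond (S : NumSgp) : ℕ := sInf {c | ∀ n, c ≤ n → n ∈ S.carrier}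

/-- The genus: the number of gaps. -/
noncomputable def NumSgp.genus (S : NumSgp) : ℕ := S.carrierᶜ.ncard

/-- The set of pseudo-Frobenius numbers. -/
def NumSgp.PF (S : NumSgp) : Set ℕ :=
  {x | x ∉ S.carrier ∧ ∀ s ∈ S.carrier, s ≠ 0 → x + s ∈ S.carrier}

/-- The type of `S`: the number of pseudo-Frobenius numbers. -/
noncomputable def NumSgp.type (S : NumSgp) : ℕ := S.PF.ncard

/-- `S` is a MED semigroup: its multiplicity is an Arf element, i.e. for all
`x, y ∈ S` with `x, y ≥ m(S)`, `x + y - m(S) ∈ S`. -/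
def NumSgp.IsMED (S : NumSgp) : Prop := S.ArfElem S.mult

/-- The MED closure of `S`: the intersection of all MED numerical semigroups
containing `S` with the same multiplicity. -/
def NumSgp.MEDclosure (S : NumSgp) : Set ℕ :=
  ⋂ T ∈ {T : NumSgp | S.carrier ⊆ T.carrier ∧ T.mult = S.mult ∧ T.IsMED}, T.carrier

/-- Multiplicity of a set of naturals. -/
noncomputable def multS (A : Set ℕ) : ℕ := sInf {n | n ∈ A ∧ n ≠ 0}

/-- The modified Apéry set `Âp(A, s)`: elements `x ∈ A` with `x - s` a gap of `A` or zero. -/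
def hAp (A : Set ℕ) (s : ℕ) : Set ℕ :=
  {x | x ∈ A ∧ ∃ d : ℕ, x = s + d ∧ (d ∉ A ∨ d = 0)}

/-- The Apéry saturation of `A`: the submonoid generated by `A` together with all
`a_k - m` for triples `a_i + a_j = a_k` of elements of `Âp(A, m)`, `m = m(A)`. -/
def ApSat (A : Set ℕ) : Set ℕ :=
  ↑(AddSubmonoid.closure (A ∪ {x : ℕ | ∃ ai ∈ hAp A (multS A), ∃ aj ∈ hAp A (multS A),
      ∃ ak ∈ hAp A (multS A), ai + aj = ak ∧ x + multS A = ak}))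

lemma hAp_spec {A : Set ℕ} {s x : ℕ} (h : x ∈ hAp A s) : x ∈ A ∧ s ≤ x :=
  ⟨h.1, by obtain ⟨d, hd, _⟩ := h.2; omega⟩

lemma decomp_aux (A : Set ℕ) (m : ℕ) (hm : m ≠ 0)
    (hmem : ∀ x ∈ A, x ≠ 0 → m ≤ x) :
    ∀ x, x ∈ A → m ≤ x → ∃ a ∈ hAp A m, ∃ k, x = a + k * m := by
  intro x
  induction x using Nat.strong_induction_on with
  | _ x ih =>
    intro hx hmx
    by_cases h : (x - m) ∉ A ∨ x - m = 0
    · exact ⟨x, ⟨hx, x - m, by omega, h⟩, 0, by omega⟩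
    · push_neg at h
      obtain ⟨h1, h2⟩ := h
      obtain ⟨a, ha, k, hk⟩ := ih (x - m) (by omega) h1 (hmem _ h1 h2)
      refine ⟨a, ha, k + 1, ?_⟩
      have hxm : x = (x - m) + m := by omega
      rw [hxm, hk]; ring

lemma mul_mem_S (S : NumSgp) {m : ℕ} (hm : m ∈ S.carrier) : ∀ k, k * m ∈ S.carrier := by
  intro k; induction k with
  | zero => simpa using S.zero_mem
  | succ k ih => rw [Nat.succ_mul]; exact S.add_mem ih hm

theorem apsat_fixed_iff_med (S : NumSgp) :
    (ApSat S.carrier = S.carrier ↔ S.IsMED) ∧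
    multS (ApSat S.carrier) = S.mult ∧ S.carrier ⊆ ApSat S.carrier := by
  have hne : {n | n ∈ S.carrier ∧ n ≠ 0}.Nonempty := by
    have hfin : (S.carrierᶜ ∪ {0}).Finite := S.cofinite.union (Set.finite_singleton 0)
    obtain ⟨n, hn⟩ := hfin.infinite_compl.nonempty
    simp only [Set.mem_compl_iff, Set.mem_union, Set.mem_singleton_iff, not_or, not_not] at hn
    exact ⟨n, hn.1, hn.2⟩
  have hmm : S.mult ∈ {n | n ∈ S.carrier ∧ n ≠ 0} := Nat.sInf_mem hne
  have hmS : S.mult ∈ S.carrier := hmm.1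
  have hm0 : S.mult ≠ 0 := hmm.2
  have hmle : ∀ n ∈ S.carrier, n ≠ 0 → S.mult ≤ n := fun n hn h0 => Nat.sInf_le ⟨hn, h0⟩
  have hmultS : multS S.carrier = S.mult := rfl
  have hsub : S.carrier ⊆ ApSat S.carrier := fun x hx =>
    AddSubmonoid.subset_closure (Or.inl hx)
  -- every nonzero element of ApSat is ≥ mult
  have hlb : ∀ n ∈ ApSat S.carrier, n ≠ 0 → S.mult ≤ n := by
    intro n hn
    refine AddSubmonoid.closure_induction ?_ ?_ ?_ hn
    · rintro x (hx | ⟨ai, hai, aj, haj, ak, hak, hsum, hx⟩)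
      · exact fun h0 => hmle x hx h0
      · intro _
        have h1 := (hAp_spec hai).2
        have h2 := (hAp_spec haj).2
        rw [hmultS] at h1 h2 hx
        omega
    · intro h; exact absurd rfl h
    · intro a b _ _ pa pb hab
      rcases Nat.eq_zero_or_pos a with h | h
      · subst h; simpa using pb (by simpa using hab)
      · have := pa (by omega); omega
  have hmApSat : S.mult ∈ ApSat S.carrier := hsub hmS
  have hmult2 : multS (ApSat S.carrier) = S.mult := by
    have hne2 : {n | n ∈ ApSat S.carrier ∧ n ≠ 0}.Nonempty := ⟨S.mult, hmApSat, hm0⟩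
    have h1 : multS (ApSat S.carrier) ≤ S.mult := Nat.sInf_le ⟨hmApSat, hm0⟩
    have h2 := Nat.sInf_mem hne2
    have h3 := hlb _ h2.1 h2.2
    exact le_antisymm h1 h3
  refine ⟨⟨?_, ?_⟩, hmult2, hsub⟩
  · -- ApSat = S → MED
    intro hEq x hx y hy hmx hmy
    obtain ⟨ai, hai, k, hk⟩ := decomp_aux S.carrier S.mult hm0 hmle x hx hmx
    obtain ⟨aj, haj, l, hl⟩ := decomp_aux S.carrier S.mult hm0 hmle y hy hmy
    have hai2 := hAp_spec hai
    have haj2 := hAp_spec haj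
    by_cases hd : ai + aj - S.mult ∈ S.carrier
    · set p := k * S.mult with hp
      set q := l * S.mult with hq
      have hgoal : x + y - S.mult = (ai + aj - S.mult) + p + q := by omega
      rw [hgoal]
      exact S.add_mem (S.add_mem hd (mul_mem_S S hmS k)) (mul_mem_S S hmS l)
    · exfalso
      apply hd
      have hakAp : ai + aj ∈ hAp S.carrier (multS S.carrier) := by
        rw [hmultS]
        exact ⟨S.add_mem hai2.1 haj2.1, ai + aj - S.mult, by omega, Or.inl hd⟩
      have : ai + aj - S.mult ∈ ApSat S.carrier := by
        apply AddSubmonoid.subset_closure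
        right
        refine ⟨ai, ?_, aj, ?_, ai + aj, hakAp, rfl, ?_⟩
        · rw [hmultS]; exact hai
        · rw [hmultS]; exact haj
        · rw [hmultS]; omega
      rw [hEq] at this
      exact this
  · -- MED → ApSat = S
    intro hmed
    apply Set.Subset.antisymm _ hsub
    intro n hn
    refine AddSubmonoid.closure_induction ?_ S.zero_mem
      (fun a b _ _ pa pb => S.add_mem pa pb) hn
    rintro x (hx | ⟨ai, hai, aj, haj, ak, hak, hsum, hx⟩)
    · exact hx
    · rw [hmultS] at hai haj hx
      have hai2 := hAp_spec hai
      have haj2 := hAp_spec haj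
      have := hmed ai hai2.1 aj haj2.1 hai2.2 haj2.2
      have hx2 : x = ai + aj - S.mult := by omega
      rwa [hx2]
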